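/- Let S = S(G, g, R, p) and S' = S(G', g', R', q) be two cone-represented sets in ℝ^n for the same closed convex cone K ⊆ ℝ^l, whose base sets {y : g − G y ∈ K} and {y : g' − G' y ∈ K} are nonempty and compact and strictly feasible. Define dist(S, S') = inf{‖z₁ − z₂‖₂ : z₁ ∈ S, z₂ ∈ S'}. Then dist(S, S') > 0 if and only if there exist λ, ν ∈ K* such that −⟨λ, G Rᵀ (p − q) + g⟩ − ⟨ν, g'⟩ > 0, ‖R Gᵀ λ‖₂ ≤ 1, and R Gᵀ λ = −R' G'ᵀ ν. -/

import Mathlib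

open Matrix
open Pointwise

/-- Euclidean (ℓ2) norm on `Fin m → ℝ`. -/
noncomputable def e2norm {m : ℕ} (x : Fin m → ℝ) : ℝ := Real.sqrt (∑ i, (x i) ^ 2)

/-- Dual cone of a set `K ⊆ ℝ^l`. -/
def dualCone {l : ℕ} (K : Set (Fin l → ℝ)) : Set (Fin l → ℝ) :=
  {y | ∀ x ∈ K, 0 ≤ y ⬝ᵥ x}

/-- The cone-represented set `S(G, g, R, p) = {z | ∃ y, g − G y ∈ K, z = R y + p}`. -/
def coneSet {n l : ℕ} (K : Set (Fin l → ℝ)) (G : Matrix (Fin l) (Fin n) ℝ)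
    (g : Fin l → ℝ) (R : Matrix (Fin n) (Fin n) ℝ) (p : Fin n → ℝ) : Set (Fin n → ℝ) :=
  {z | ∃ y, g - G *ᵥ y ∈ K ∧ z = R *ᵥ y + p}



lemma e2norm_nonneg {m : ℕ} (x : Fin m → ℝ) : 0 ≤ e2norm x := Real.sqrt_nonneg _

lemma e2norm_eq_norm {m : ℕ} (x : Fin m → ℝ) :
    e2norm x = ‖(WithLp.equiv 2 (Fin m → ℝ)).symm x‖ := by
  rw [EuclideanSpace.norm_eq]
  simp [e2norm, Real.norm_eq_abs, sq_abs]

lemma dot_eq_inner {m : ℕ} (x y : Fin m → ℝ) :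
    x ⬝ᵥ y = (inner ℝ ((WithLp.equiv 2 (Fin m → ℝ)).symm x) ((WithLp.equiv 2 (Fin m → ℝ)).symm y) : ℝ) := by
  rw [PiLp.inner_apply]
  simp [dotProduct, mul_comm]

lemma dot_le_e2norm {m : ℕ} (x y : Fin m → ℝ) : x ⬝ᵥ y ≤ e2norm x * e2norm y := by
  rw [dot_eq_inner, e2norm_eq_norm, e2norm_eq_norm]
  exact real_inner_le_norm _ _

lemma e2norm_eq_zero {m : ℕ} {x : Fin m → ℝ} (h : e2norm x = 0) : x = 0 := by
  rw [e2norm_eq_norm] at h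
  have := norm_eq_zero.mp h
  simpa using congrArg (WithLp.equiv 2 (Fin m → ℝ)) this

lemma e2norm_smul {m : ℕ} (c : ℝ) (hc : 0 ≤ c) (x : Fin m → ℝ) :
    e2norm (c • x) = c * e2norm x := by
  have : (WithLp.equiv 2 (Fin m → ℝ)).symm (c • x) = c • (WithLp.equiv 2 (Fin m → ℝ)).symm x := rfl
  rw [e2norm_eq_norm, this, norm_smul, e2norm_eq_norm, Real.norm_eq_abs, abs_of_nonneg hc]

lemma e2norm_sub_comm {m : ℕ} (x y : Fin m → ℝ) : e2norm (x - y) = e2norm (y - x) := by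
  unfold e2norm
  congr 1
  exact Finset.sum_congr rfl fun i _ => by simp [Pi.sub_apply]; ring

lemma clm_repr {m : ℕ} (f : (Fin m → ℝ) →L[ℝ] ℝ) :
    ∃ a : Fin m → ℝ, ∀ x, f x = a ⬝ᵥ x := by
  refine ⟨fun i => f (Pi.single (M := fun _ => ℝ) i 1), fun x => ?_⟩
  have hx : x = ∑ i, x i • Pi.single (M := fun _ => ℝ) i 1 := by
    rw [← Finset.univ_sum_single x]
    exact Finset.sum_congr rfl fun i _ => by
      ext j; by_cases h : i = j <;> simp [Pi.single_apply, h]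
  conv_lhs => rw [hx]
  rw [map_sum]
  simp [dotProduct, mul_comm]

lemma continuous_dot {m : ℕ} (a : Fin m → ℝ) : Continuous (fun x : Fin m → ℝ => a ⬝ᵥ x) := by
  unfold dotProduct
  exact continuous_finset_sum _ fun i _ => (continuous_const.mul (continuous_apply i))

lemma continuous_mulVec {m k : ℕ} (A : Matrix (Fin m) (Fin k) ℝ) :
    Continuous (fun y : Fin k → ℝ => A *ᵥ y) :=
  continuous_pi fun i => continuous_dot (A i)

lemma nonpos_of_forall_smul {d C : ℝ} (h : ∀ s : ℝ, 0 < s → s * d ≤ C) : d ≤ 0 := by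
  by_contra hd
  push_neg at hd
  have hs : (0:ℝ) < (|C| + 1) / d := by positivity
  have := h _ hs
  rw [div_mul_cancel₀ _ (ne_of_gt hd)] at this
  have : |C| + 1 ≤ |C| := le_trans this (le_abs_self C)
  linarith

lemma le_of_forall_small {a C m : ℝ} (h : ∀ s : ℝ, 0 < s → a ≤ C + s * m) : a ≤ C := by
  rcases le_or_gt m 0 with hm | hm
  · have := h 1 one_pos
    nlinarith
  · refine le_of_forall_pos_le_add fun ε hε => ?_
    have := h (ε / m) (by positivity)
    rw [div_mul_cancel₀ _ (ne_of_gt hm)] at this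
    linarith

lemma nonpos_of_small {d m : ℝ} (h : ∀ s : ℝ, 0 < s → s ≤ 1 → d ≤ s * m) : d ≤ 0 := by
  rcases le_or_gt m 0 with hm | hm
  · have := h 1 one_pos le_rfl; linarith
  · refine le_of_forall_pos_le_add fun ε hε => ?_
    rcases le_or_gt (ε / m) 1 with h1 | h1
    · have := h (ε / m) (by positivity) h1
      rw [div_mul_cancel₀ _ (ne_of_gt hm)] at this
      linarith
    · have := h 1 one_pos le_rfl
      have : d ≤ m := by linarith
      have hme : m < ε := by
        rw [lt_div_iff₀ hm] at h1; linarith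
      linarith


lemma farkas {n l : ℕ} (K : Set (Fin l → ℝ)) (hKconv : Convex ℝ K)
    (hKcone : ∀ c : ℝ, 0 < c → ∀ x ∈ K, c • x ∈ K)
    (G : Matrix (Fin l) (Fin n) ℝ) (g : Fin l → ℝ)
    (hsf : ∃ y, g - G *ᵥ y ∈ interior K)
    (b : Fin n → ℝ) (c : ℝ) (hc : ∀ y, g - G *ᵥ y ∈ K → b ⬝ᵥ y ≤ c)
    {ε : ℝ} (hε : 0 < ε) :
    ∃ lam ∈ dualCone K, Gᵀ *ᵥ lam = b ∧ lam ⬝ᵥ g ≤ c + ε := by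
  obtain ⟨yh, hyh⟩ := hsf
  set k₀ : Fin l → ℝ := g - G *ᵥ yh with hk₀def
  -- the open convex set
  set A : Set ((Fin l → ℝ) × ℝ) :=
    {w | ∃ y, g - G *ᵥ y + w.1 ∈ interior K ∧ w.2 < b ⬝ᵥ y} with hAdef
  have hAopen : IsOpen A := by
    have : A = ⋃ y : Fin n → ℝ,
        ((fun w : (Fin l → ℝ) × ℝ => g - G *ᵥ y + w.1) ⁻¹' interior K)
          ∩ {w : (Fin l → ℝ) × ℝ | w.2 < b ⬝ᵥ y} := by
      ext w; simp [hAdef, Set.mem_iUnion, and_comm]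
    rw [this]
    refine isOpen_iUnion fun y => IsOpen.inter ?_ ?_
    · exact isOpen_interior.preimage (continuous_const.add continuous_fst)
    · exact isOpen_lt continuous_snd continuous_const
  have hAconv : Convex ℝ A := by
    rintro w₁ ⟨y₁, hw₁, ht₁⟩ w₂ ⟨y₂, hw₂, ht₂⟩ a bb ha hb hab
    refine ⟨a • y₁ + bb • y₂, ?_, ?_⟩
    · have heq : g - G *ᵥ (a • y₁ + bb • y₂) + (a • w₁ + bb • w₂).1
          = a • (g - G *ᵥ y₁ + w₁.1) + bb • (g - G *ᵥ y₂ + w₂.1) := by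
        have hbb : bb = 1 - a := by linarith
        funext i
        simp [Matrix.mulVec_add, Matrix.mulVec_smul, hbb]
        ring
      rw [heq]
      exact hKconv.interior hw₁ hw₂ ha hb hab
    · have hdot : b ⬝ᵥ (a • y₁ + bb • y₂) = a * (b ⬝ᵥ y₁) + bb * (b ⬝ᵥ y₂) := by
        simp [dotProduct_add, dotProduct_smul, smul_eq_mul]
      rw [hdot]
      rcases eq_or_lt_of_le ha with ha0 | ha0
      · have hbb : bb = 1 := by linarith
        simp [← ha0, hbb]
        simpa using ht₂
      · have h1 : a * w₁.2 < a * (b ⬝ᵥ y₁) := by exact (mul_lt_mul_iff_right₀ ha0).mpr ht₁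
        have h2 : bb * w₂.2 ≤ bb * (b ⬝ᵥ y₂) := mul_le_mul_of_nonneg_left ht₂.le hb
        have : (a • w₁ + bb • w₂).2 = a * w₁.2 + bb * w₂.2 := rfl
        rw [this]; linarith
  have hx₀ : ((0 : Fin l → ℝ), c + ε) ∉ A := by
    rintro ⟨y, h1, h2⟩
    simp only [add_zero] at h1
    have := hc y (interior_subset h1)
    simp at h2
    linarith
  obtain ⟨f, hf⟩ := geometric_hahn_banach_open_point hAconv hAopen hx₀
  -- represent f
  obtain ⟨lam0, hlam0⟩ := clm_repr (f.comp (ContinuousLinearMap.inl ℝ (Fin l → ℝ) ℝ))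
  set μ : ℝ := f ((0 : Fin l → ℝ), (1:ℝ)) with hμdef
  have hfr : ∀ u t, f (u, t) = lam0 ⬝ᵥ u + t * μ := by
    intro u t
    have hsplit : ((u, t) : (Fin l → ℝ) × ℝ)
        = ((u, 0) : (Fin l → ℝ) × ℝ) + t • (((0 : Fin l → ℝ), (1:ℝ))) := by
      ext <;> simp
    rw [hsplit, map_add, f.map_smul]
    have : f (u, (0:ℝ)) = lam0 ⬝ᵥ u := hlam0 u
    rw [this, smul_eq_mul]
  -- the key inequality
  have hkey : ∀ (y : Fin n → ℝ) (k : Fin l → ℝ), k ∈ interior K →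
      ∀ t, t < b ⬝ᵥ y → lam0 ⬝ᵥ (k - (g - G *ᵥ y)) + t * μ ≤ (c + ε) * μ := by
    intro y k hk t ht
    have hmem : ((k - (g - G *ᵥ y), t) : (Fin l → ℝ) × ℝ) ∈ A := by
      refine ⟨y, ?_, ht⟩
      simpa using hk
    have := hf _ hmem
    rw [hfr, hfr] at this
    simpa using this.le
  -- scaling interior
  have hint_smul : ∀ s : ℝ, 0 < s → ∀ k ∈ interior K, s • k ∈ interior K := by
    intro s hs k hk
    have h1 : s • K ⊆ K := by
      rintro _ ⟨x, hx, rfl⟩; exact hKcone s hs x hx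
    have h2 : s • interior K ⊆ interior K := by
      rw [← interior_smul₀ (ne_of_gt hs) K]
      exact interior_mono h1
    exact h2 (Set.smul_mem_smul_set hk)
  have hk₀ : k₀ ∈ interior K := hyh
  set T : ℝ := b ⬝ᵥ yh with hTdef
  -- μ nonneg
  have hbase : ∀ t, t < T → t * μ ≤ (c + ε) * μ := by
    intro t ht
    have := hkey yh k₀ hk₀ t ht
    simpa [hk₀def] using this
  have hμ0 : 0 ≤ μ := by
    by_contra hμ
    push_neg at hμ
    have : (-μ) ≤ 0 := by
      refine nonpos_of_forall_smul (C := (c + ε) * μ - T * μ) fun s hs => ?_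
      have := hbase (T - s) (by linarith)
      nlinarith
    linarith
  have hμne : μ ≠ 0 := by
    intro h0
    have h1 := hf ((k₀ - (g - G *ᵥ yh), T - 1) : (Fin l → ℝ) × ℝ) ⟨yh, by simpa using hk₀, by simp [hTdef]⟩
    rw [hfr, hfr] at h1
    simp [h0, hk₀def] at h1
  have hμpos : 0 < μ := lt_of_le_of_ne hμ0 (Ne.symm hμne)
  -- lam0 nonpositive on interior K
  have hintle : ∀ k ∈ interior K, lam0 ⬝ᵥ k ≤ 0 := by
    intro k hk
    refine nonpos_of_forall_smul
      (C := (c + ε) * μ + lam0 ⬝ᵥ (g - G *ᵥ yh) - (T - 1) * μ) fun s hs => ?_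
    have := hkey yh (s • k) (hint_smul s hs k hk) (T - 1) (by linarith)
    rw [dotProduct_sub, dotProduct_smul, smul_eq_mul] at this
    linarith
  have hKle : ∀ x ∈ K, lam0 ⬝ᵥ x ≤ 0 := by
    intro x hx
    have he : lam0 ⬝ᵥ k₀ ≤ 0 := hintle k₀ hk₀
    refine nonpos_of_small (m := lam0 ⬝ᵥ x - lam0 ⬝ᵥ k₀) fun s hs hs1 => ?_
    have hmem : (1 - s) • x + s • k₀ ∈ interior K :=
      hKconv.combo_self_interior_mem_interior hx hk₀ (by linarith) hs (by ring)
    have := hintle _ hmem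
    rw [dotProduct_add, dotProduct_smul, dotProduct_smul, smul_eq_mul, smul_eq_mul] at this
    nlinarith
  -- main inequality in y
  have hmainy : ∀ y : Fin n → ℝ,
      lam0 ⬝ᵥ (G *ᵥ y) - lam0 ⬝ᵥ g + (b ⬝ᵥ y) * μ ≤ (c + ε) * μ := by
    intro y
    have step1 : ∀ s : ℝ, 0 < s →
        s * (lam0 ⬝ᵥ k₀) + lam0 ⬝ᵥ (G *ᵥ y) - lam0 ⬝ᵥ g + (b ⬝ᵥ y) * μ ≤ (c + ε) * μ := by
      intro s hs
      refine le_of_forall_small (m := μ) fun s' hs' => ?_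
      have := hkey y (s • k₀) (hint_smul s hs k₀ hk₀) (b ⬝ᵥ y - s') (by linarith)
      rw [dotProduct_sub, dotProduct_sub, dotProduct_smul, smul_eq_mul] at this
      nlinarith
    refine le_of_forall_small (m := -(lam0 ⬝ᵥ k₀)) fun s hs => ?_
    have := step1 s hs
    linarith
  -- define lam
  set lam : Fin l → ℝ := (-μ⁻¹) • lam0 with hlamdef
  have hlam0eq : ∀ v : Fin l → ℝ, lam ⬝ᵥ v = (-μ⁻¹) * (lam0 ⬝ᵥ v) := by
    intro v; rw [hlamdef, smul_dotProduct, smul_eq_mul]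
  have hdual : lam ∈ dualCone K := by
    intro x hx
    rw [hlam0eq]
    have := hKle x hx
    have hμinv : 0 < μ⁻¹ := inv_pos.mpr hμpos
    nlinarith
  -- divided inequality
  have hdiv : ∀ y : Fin n → ℝ, b ⬝ᵥ y - lam ⬝ᵥ (G *ᵥ y) ≤ c + ε - lam ⬝ᵥ g := by
    intro y
    have h1 := hmainy y
    rw [hlam0eq, hlam0eq]
    have hμinv : 0 < μ⁻¹ := inv_pos.mpr hμpos
    have h2 : (lam0 ⬝ᵥ (G *ᵥ y) - lam0 ⬝ᵥ g) * μ⁻¹ + (b ⬝ᵥ y) * (μ * μ⁻¹) ≤ (c + ε) * (μ * μ⁻¹) := by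
      nlinarith
    rw [mul_inv_cancel₀ hμne] at h2
    nlinarith
  have hrw : ∀ y : Fin n → ℝ, lam ⬝ᵥ (G *ᵥ y) = (Gᵀ *ᵥ lam) ⬝ᵥ y := by
    intro y
    rw [Matrix.dotProduct_mulVec, Matrix.mulVec_transpose]
  have hGl : Gᵀ *ᵥ lam = b := by
    have hd : ∀ y : Fin n → ℝ, (b - Gᵀ *ᵥ lam) ⬝ᵥ y ≤ c + ε - lam ⬝ᵥ g := by
      intro y
      have := hdiv y
      rw [hrw] at this
      rw [sub_dotProduct]
      linarith
    set dv : Fin l → ℝ := 0 -- dummy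
    have hsq : (b - Gᵀ *ᵥ lam) ⬝ᵥ (b - Gᵀ *ᵥ lam) ≤ 0 := by
      refine nonpos_of_forall_smul (C := c + ε - lam ⬝ᵥ g) fun s hs => ?_
      have := hd (s • (b - Gᵀ *ᵥ lam))
      rw [dotProduct_smul, smul_eq_mul] at this
      linarith
    have hzero : b - Gᵀ *ᵥ lam = 0 := by
      funext i
      have hsum : ∑ j, (b - Gᵀ *ᵥ lam) j * (b - Gᵀ *ᵥ lam) j ≤ 0 := hsq
      have hall : ∀ j ∈ Finset.univ, (0:ℝ) ≤ (b - Gᵀ *ᵥ lam) j * (b - Gᵀ *ᵥ lam) j :=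
        fun j _ => mul_self_nonneg _
      have := (Finset.sum_eq_zero_iff_of_nonneg hall).mp
        (le_antisymm hsum (Finset.sum_nonneg hall))
      have := this i (Finset.mem_univ i)
      have := mul_self_eq_zero.mp this
      simpa using this
    have := sub_eq_zero.mp hzero
    exact this.symm
  refine ⟨lam, hdual, hGl, ?_⟩
  have := hdiv 0
  simpa using this


lemma dot_mulVec_eq {m k : ℕ} (a : Fin m → ℝ) (M : Matrix (Fin m) (Fin k) ℝ) (y : Fin k → ℝ) :
    a ⬝ᵥ (M *ᵥ y) = (Mᵀ *ᵥ a) ⬝ᵥ y := by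
  rw [Matrix.dotProduct_mulVec, Matrix.mulVec_transpose]

lemma coneSet_convex {n l : ℕ} (K : Set (Fin l → ℝ)) (hKconv : Convex ℝ K)
    (G : Matrix (Fin l) (Fin n) ℝ) (g : Fin l → ℝ) (R : Matrix (Fin n) (Fin n) ℝ)
    (p : Fin n → ℝ) : Convex ℝ (coneSet K G g R p) := by
  rintro z₁ ⟨y₁, hy₁, rfl⟩ z₂ ⟨y₂, hy₂, rfl⟩ a b ha hb hab
  refine ⟨a • y₁ + b • y₂, ?_, ?_⟩
  · have heq : g - G *ᵥ (a • y₁ + b • y₂)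
        = a • (g - G *ᵥ y₁) + b • (g - G *ᵥ y₂) := by
      have hb1 : b = 1 - a := by linarith
      funext i
      simp [Matrix.mulVec_add, Matrix.mulVec_smul, hb1]
      ring
    rw [heq]
    exact hKconv hy₁ hy₂ ha hb hab
  · have hb1 : b = 1 - a := by linarith
    funext i
    simp [Matrix.mulVec_add, Matrix.mulVec_smul, hb1]
    ring

lemma coneSet_compact {n l : ℕ} (K : Set (Fin l → ℝ))
    (G : Matrix (Fin l) (Fin n) ℝ) (g : Fin l → ℝ) (R : Matrix (Fin n) (Fin n) ℝ)
    (p : Fin n → ℝ) (hcpt : IsCompact {y | g - G *ᵥ y ∈ K}) :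
    IsCompact (coneSet K G g R p) := by
  have him : coneSet K G g R p = (fun y => R *ᵥ y + p) '' {y | g - G *ᵥ y ∈ K} := by
    ext z
    constructor
    · rintro ⟨y, hy, rfl⟩; exact ⟨y, hy, rfl⟩
    · rintro ⟨y, hy, rfl⟩; exact ⟨y, hy, rfl⟩
  rw [him]
  exact hcpt.image ((continuous_mulVec R).add continuous_const)

theorem dist_pos_iff_dual_feasible {n l : ℕ} (K : Set (Fin l → ℝ))
    (hKclosed : IsClosed K) (hKconv : Convex ℝ K)
    (hKcone : ∀ c : ℝ, 0 < c → ∀ x ∈ K, c • x ∈ K)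
    (hKint : (interior K).Nonempty)
    (G G' : Matrix (Fin l) (Fin n) ℝ) (g g' : Fin l → ℝ)
    (R R' : Matrix (Fin n) (Fin n) ℝ)
    (hR : R * Rᵀ = 1) (hR' : R' * R'ᵀ = 1)
    (p q : Fin n → ℝ)
    (hne : {y | g - G *ᵥ y ∈ K}.Nonempty)
    (hne' : {y | g' - G' *ᵥ y ∈ K}.Nonempty)
    (hcpt : IsCompact {y | g - G *ᵥ y ∈ K})
    (hcpt' : IsCompact {y | g' - G' *ᵥ y ∈ K})
    (hsf : ∃ y, g - G *ᵥ y ∈ interior K)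
    (hsf' : ∃ y, g' - G' *ᵥ y ∈ interior K) :
    0 < sInf {d : ℝ | ∃ z₁ ∈ coneSet K G g R p, ∃ z₂ ∈ coneSet K G' g' R' q,
        d = e2norm (z₁ - z₂)} ↔
      ∃ lam nu, lam ∈ dualCone K ∧ nu ∈ dualCone K ∧
        0 < -(lam ⬝ᵥ (G *ᵥ (Rᵀ *ᵥ (p - q)) + g)) - nu ⬝ᵥ g' ∧
        e2norm (R *ᵥ (Gᵀ *ᵥ lam)) ≤ 1 ∧
        R *ᵥ (Gᵀ *ᵥ lam) = -(R' *ᵥ (G'ᵀ *ᵥ nu)) := by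
  set S := coneSet K G g R p with hSdef
  set S' := coneSet K G' g' R' q with hS'def
  set D := {d : ℝ | ∃ z₁ ∈ S, ∃ z₂ ∈ S', d = e2norm (z₁ - z₂)} with hDdef
  have hDbdd : BddBelow D := by
    refine ⟨0, fun d hd => ?_⟩
    obtain ⟨z₁, _, z₂, _, rfl⟩ := hd
    exact e2norm_nonneg _
  obtain ⟨y₁0, hy₁0⟩ := hne
  obtain ⟨y₂0, hy₂0⟩ := hne'
  have hSne : S.Nonempty := ⟨R *ᵥ y₁0 + p, y₁0, hy₁0, rfl⟩
  have hS'ne : S'.Nonempty := ⟨R' *ᵥ y₂0 + q, y₂0, hy₂0, rfl⟩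
  have hDne : D.Nonempty := by
    obtain ⟨z₁, hz₁⟩ := hSne
    obtain ⟨z₂, hz₂⟩ := hS'ne
    exact ⟨e2norm (z₁ - z₂), z₁, hz₁, z₂, hz₂, rfl⟩
  have hRtR : Rᵀ * R = 1 := mul_eq_one_comm.mp hR
  have hR'tR' : R'ᵀ * R' = 1 := mul_eq_one_comm.mp hR'
  constructor
  · -- forward
    intro hpos
    have hdisj : Disjoint S S' := by
      rw [Set.disjoint_left]
      intro z hz hz'
      have h0 : (0:ℝ) ∈ D := ⟨z, hz, z, hz', by simp [e2norm]⟩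
      have := csInf_le hDbdd h0
      linarith
    obtain ⟨f, u₀, v₀, hfs, huv, hft⟩ :=
      geometric_hahn_banach_compact_closed (coneSet_convex K hKconv G g R p)
        (coneSet_compact K G g R p hcpt) (coneSet_convex K hKconv G' g' R' q)
        (coneSet_compact K G' g' R' q hcpt').isClosed hdisj
    obtain ⟨a₀, ha₀⟩ := clm_repr f
    have ha₀ne : a₀ ≠ 0 := by
      rintro rfl
      obtain ⟨z₁, hz₁⟩ := hSne
      obtain ⟨z₂, hz₂⟩ := hS'ne
      have h1 := hfs z₁ hz₁
      have h2 := hft z₂ hz₂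
      rw [ha₀] at h1 h2
      simp [zero_dotProduct] at h1 h2
      linarith
    have hna : 0 < e2norm a₀ := by
      rcases lt_or_eq_of_le (e2norm_nonneg a₀) with h | h
      · exact h
      · exact absurd (e2norm_eq_zero h.symm) ha₀ne
    set na := e2norm a₀ with hnadef
    set a : Fin n → ℝ := na⁻¹ • a₀ with hadef
    have hea : e2norm a = 1 := by
      rw [hadef, e2norm_smul _ (by positivity), ← hnadef, inv_mul_cancel₀ (ne_of_gt hna)]
    set u := na⁻¹ * u₀ with hudef
    set v := na⁻¹ * v₀ with hvdef
    have huv' : u < v := by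
      rw [hudef, hvdef]
      exact (mul_lt_mul_iff_right₀ (by positivity)).mpr huv
    have hSa : ∀ z ∈ S, a ⬝ᵥ z < u := by
      intro z hz
      have := hfs z hz
      rw [ha₀] at this
      rw [hadef, smul_dotProduct, smul_eq_mul, hudef]
      exact (mul_lt_mul_iff_right₀ (by positivity)).mpr this
    have hS'a : ∀ z ∈ S', v < a ⬝ᵥ z := by
      intro z hz
      have := hft z hz
      rw [ha₀] at this
      rw [hadef, smul_dotProduct, smul_eq_mul, hvdef]
      exact (mul_lt_mul_iff_right₀ (by positivity)).mpr this
    have hb1 : ∀ y, g - G *ᵥ y ∈ K → (Rᵀ *ᵥ a) ⬝ᵥ y ≤ u - a ⬝ᵥ p := by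
      intro y hy
      have hz : R *ᵥ y + p ∈ S := ⟨y, hy, rfl⟩
      have h1 := hSa _ hz
      rw [dotProduct_add, dot_mulVec_eq] at h1
      linarith
    obtain ⟨lam, hlamdual, hlamG, hlamg⟩ :=
      farkas K hKconv hKcone G g hsf (Rᵀ *ᵥ a) (u - a ⬝ᵥ p) hb1 (ε := (v - u)/4)
        (by linarith)
    have hb2 : ∀ y, g' - G' *ᵥ y ∈ K → (R'ᵀ *ᵥ (-a)) ⬝ᵥ y ≤ -v + a ⬝ᵥ q := by
      intro y hy
      have hz : R' *ᵥ y + q ∈ S' := ⟨y, hy, rfl⟩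
      have h1 := hS'a _ hz
      rw [dotProduct_add, dot_mulVec_eq] at h1
      rw [Matrix.mulVec_neg, neg_dotProduct]
      linarith
    obtain ⟨nu, hnudual, hnuG, hnug⟩ :=
      farkas K hKconv hKcone G' g' hsf' (R'ᵀ *ᵥ (-a)) (-v + a ⬝ᵥ q) hb2 (ε := (v - u)/4)
        (by linarith)
    have hRa : R *ᵥ (Gᵀ *ᵥ lam) = a := by
      rw [hlamG, Matrix.mulVec_mulVec, hR, Matrix.one_mulVec]
    have hR'a : R' *ᵥ (G'ᵀ *ᵥ nu) = -a := by
      rw [hnuG, Matrix.mulVec_mulVec, hR', Matrix.one_mulVec]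
    refine ⟨lam, nu, hlamdual, hnudual, ?_, ?_, ?_⟩
    · have hc1 : lam ⬝ᵥ (G *ᵥ (Rᵀ *ᵥ (p - q))) = a ⬝ᵥ (p - q) := by
        rw [dot_mulVec_eq, hlamG, dot_mulVec_eq, Matrix.transpose_transpose,
          Matrix.mulVec_mulVec, hR, Matrix.one_mulVec]
      rw [dotProduct_add, hc1, dotProduct_sub]
      linarith
    · rw [hRa, hea]
    · rw [hRa, hR'a, neg_neg]
  · -- backward
    rintro ⟨lam, nu, hld, hnd, hpos, hnorm, heq⟩
    obtain ⟨a, hadef⟩ : ∃ a, a = R *ᵥ (Gᵀ *ᵥ lam) := ⟨_, rfl⟩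
    rw [← hadef] at heq hnorm
    obtain ⟨δ, hδdef⟩ : ∃ δ, δ = -(lam ⬝ᵥ (G *ᵥ (Rᵀ *ᵥ (p - q)) + g)) - nu ⬝ᵥ g' := ⟨_, rfl⟩
    rw [← hδdef] at hpos
    have hbound : ∀ d ∈ D, δ ≤ d := by
      rintro d ⟨z₁, ⟨y₁, hy₁, rfl⟩, z₂, ⟨y₂, hy₂, rfl⟩, rfl⟩
      have haz₁ : a ⬝ᵥ (R *ᵥ y₁ + p) = (Gᵀ *ᵥ lam) ⬝ᵥ y₁ + a ⬝ᵥ p := by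
        rw [dotProduct_add]
        congr 1
        rw [dot_mulVec_eq, hadef, Matrix.mulVec_mulVec, Matrix.mulVec_mulVec,
          hRtR, Matrix.one_mul]
      have haz₂ : a ⬝ᵥ (R' *ᵥ y₂ + q) = -((G'ᵀ *ᵥ nu) ⬝ᵥ y₂) + a ⬝ᵥ q := by
        rw [dotProduct_add]
        congr 1
        rw [dot_mulVec_eq]
        have hpre : R'ᵀ *ᵥ a = -(G'ᵀ *ᵥ nu) := by
          rw [heq, Matrix.mulVec_neg, Matrix.mulVec_mulVec, Matrix.mulVec_mulVec,
            hR'tR', Matrix.one_mul]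
        rw [hpre, neg_dotProduct]
      have hl1 : (Gᵀ *ᵥ lam) ⬝ᵥ y₁ ≤ lam ⬝ᵥ g := by
        have h0 := hld _ hy₁
        rw [dotProduct_sub] at h0
        rw [← dot_mulVec_eq]
        linarith
      have hl2 : (G'ᵀ *ᵥ nu) ⬝ᵥ y₂ ≤ nu ⬝ᵥ g' := by
        have h0 := hnd _ hy₂
        rw [dotProduct_sub] at h0
        rw [← dot_mulVec_eq]
        linarith
      have hapq : a ⬝ᵥ (p - q) = lam ⬝ᵥ (G *ᵥ (Rᵀ *ᵥ (p - q))) := by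
        have h1 : a ⬝ᵥ (p - q) = (Rᵀ *ᵥ (p - q)) ⬝ᵥ (Gᵀ *ᵥ lam) := by
          rw [hadef, dotProduct_comm, dot_mulVec_eq]
        have h2 : lam ⬝ᵥ (G *ᵥ (Rᵀ *ᵥ (p - q))) = (Gᵀ *ᵥ lam) ⬝ᵥ (Rᵀ *ᵥ (p - q)) :=
          dot_mulVec_eq _ _ _
        rw [h1, h2, dotProduct_comm]
      have hδle : δ ≤ a ⬝ᵥ ((R' *ᵥ y₂ + q) - (R *ᵥ y₁ + p)) := by
        rw [dotProduct_sub, haz₁, haz₂]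
        rw [hδdef, dotProduct_add]
        have hpq : a ⬝ᵥ p - a ⬝ᵥ q = lam ⬝ᵥ (G *ᵥ (Rᵀ *ᵥ (p - q))) := by
          rw [← hapq, dotProduct_sub]
        linarith
      have hcs : a ⬝ᵥ ((R' *ᵥ y₂ + q) - (R *ᵥ y₁ + p))
          ≤ e2norm ((R *ᵥ y₁ + p) - (R' *ᵥ y₂ + q)) := by
        calc a ⬝ᵥ ((R' *ᵥ y₂ + q) - (R *ᵥ y₁ + p))
            ≤ e2norm a * e2norm ((R' *ᵥ y₂ + q) - (R *ᵥ y₁ + p)) := dot_le_e2norm _ _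
          _ ≤ 1 * e2norm ((R' *ᵥ y₂ + q) - (R *ᵥ y₁ + p)) := by
              exact mul_le_mul_of_nonneg_right hnorm (e2norm_nonneg _)
          _ = e2norm ((R *ᵥ y₁ + p) - (R' *ᵥ y₂ + q)) := by
              rw [one_mul, e2norm_sub_comm]
      linarith
    exact lt_of_lt_of_le hpos (le_csInf hDne hbound)
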